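/- Let h, s be positive integers and let 𝔞 = (S, 𝓛) be an (s,h)-array in a graph G. Then G[S ∪ V(𝓛)] contains K_{s,s} as a minor, and hence has treewidth at least s. -/

import Mathlib

open SimpleGraph

universe u

variable {V : Type u}

structure IndPath (G : SimpleGraph V) where
  n : ℕ
  npos : 0 < n
  f : Fin n → V
  inj : Function.Injective f
  adj : ∀ i j : Fin n, G.Adj (f i) (f j) ↔ ((i : ℕ) + 1 = j ∨ (j : ℕ) + 1 = i)

def IndPath.verts {G : SimpleGraph V} (L : IndPath G) : Set V := Set.range L.f

def IndPath.length {G : SimpleGraph V} (L : IndPath G) : ℕ := L.n - 1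

structure IndCycle (G : SimpleGraph V) where
  n : ℕ
  hn : 3 ≤ n
  f : ZMod n → V
  inj : Function.Injective f
  adj : ∀ i j : ZMod n, G.Adj (f i) (f j) ↔ (i = j + 1 ∨ j = i + 1)

def Pinched (c h : ℕ) (G : SimpleGraph V) : Prop :=
  ¬ ∃ (x : V) (C : Fin c → IndCycle G),
      (∀ i, h + 2 ≤ (C i).n) ∧
      (∀ i, (C i).f 0 = x) ∧
      (∀ i j : Fin c, i ≠ j →
        (Set.range (C i).f ∩ Set.range (C j).f = {x}) ∧
        (∀ u ∈ Set.range (C i).f, ∀ v ∈ Set.range (C j).f,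
          u ≠ x → v ≠ x → ¬ G.Adj u v))

structure Constellation (G : SimpleGraph V) (s l : ℕ) where
  S : Finset V
  card_S : S.card = s
  stable : ∀ x ∈ S, ∀ y ∈ S, ¬ G.Adj x y
  P : Fin l → IndPath G
  disj : ∀ i j : Fin l, i ≠ j → Disjoint (P i).verts (P j).verts
  sep : ∀ x ∈ S, ∀ i : Fin l, x ∉ (P i).verts
  nbr : ∀ x ∈ S, ∀ i : Fin l, ∃ v ∈ (P i).verts, G.Adj x v

def Constellation.Plain {G : SimpleGraph V} {s l : ℕ} (c : Constellation G s l) : Prop :=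
  ∀ i j : Fin l, i ≠ j → ∀ u ∈ (c.P i).verts, ∀ v ∈ (c.P j).verts, ¬ G.Adj u v

def Constellation.Meager {G : SimpleGraph V} {s l : ℕ} (c : Constellation G s l) (d : ℕ) : Prop :=
  ∀ i : Fin l, ∀ p : Fin (c.P i).n, ((↑c.S : Set V) ∩ {x | G.Adj x ((c.P i).f p)}).ncard ≤ d

def Constellation.Hollow {G : SimpleGraph V} {s l : ℕ} (c : Constellation G s l) (h : ℕ) : Prop :=
  ∀ x ∈ c.S, ∀ i : Fin l, ∀ p q : Fin (c.P i).n, (p : ℕ) < q →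
    G.Adj x ((c.P i).f p) → G.Adj x ((c.P i).f q) →
    (∀ r : Fin (c.P i).n, (p : ℕ) < r → (r : ℕ) < q → ¬ G.Adj x ((c.P i).f r)) →
    (q : ℕ) - p < h

structure PathAlignment (G : SimpleGraph V) (s : ℕ) extends Constellation G s 1 where
  π : Fin s → V
  π_inj : Function.Injective π
  π_mem : ∀ i, π i ∈ S
  order : ∃ rev : Bool, ∀ i j : Fin s, i < j →
    ∀ p q : Fin (P 0).n, G.Adj (π i) ((P 0).f p) → G.Adj (π j) ((P 0).f q) →
      (if rev then (q : ℕ) < p else (p : ℕ) < q)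

structure PDArray (G : SimpleGraph V) (s h : ℕ) extends Constellation G s s where
  plain : toConstellation.Plain
  hollow : toConstellation.Hollow h
  π : Fin s → V
  π_inj : Function.Injective π
  π_mem : ∀ i, π i ∈ S
  aligned : ∀ k : Fin s, ∃ rev : Bool, ∀ i j : Fin s, i < j →
    ∀ p q : Fin (P k).n, G.Adj (π i) ((P k).f p) → G.Adj (π j) ((P k).f q) →
      (if rev then (q : ℕ) < p else (p : ℕ) < q)

def PDArray.verts {G : SimpleGraph V} {s h : ℕ} (A : PDArray G s h) : Set V :=
  (↑A.S : Set V) ∪ ⋃ i : Fin s, (A.P i).verts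

def IsMinor {W : Type*} (H : SimpleGraph W) (G : SimpleGraph V) : Prop :=
  ∃ B : W → Set V,
    (∀ w, (B w).Nonempty) ∧
    (∀ w, (G.induce (B w)).Connected) ∧
    (∀ w w' : W, w ≠ w' → Disjoint (B w) (B w')) ∧
    (∀ w w' : W, H.Adj w w' → ∃ u ∈ B w, ∃ v ∈ B w', G.Adj u v)

def TreewidthLe (G : SimpleGraph V) (w : ℕ) : Prop :=
  ∃ (ι : Type u) (T : SimpleGraph ι), T.IsAcyclic ∧ T.Connected ∧
    ∃ t : V → Set ι,
      (∀ v, (t v).Nonempty) ∧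
      (∀ v, (T.induce (t v)).Connected) ∧
      (∀ u v : V, G.Adj u v → (t u ∩ t v).Nonempty) ∧
      (∀ x : ι, {v : V | x ∈ t v}.ncard ≤ w + 1)

def PD (s : ℕ) : SimpleGraph (Fin s ⊕ Fin s × Fin s) :=
  SimpleGraph.fromRel (fun a b =>
    match a, b with
    | Sum.inr (i, k), Sum.inr (i', k') => i = i' ∧ (k : ℕ) + 1 = (k' : ℕ)
    | Sum.inl j, Sum.inr (_, k) => k = j
    | _, _ => False)

/-! ### Auxiliary lemmas about trees, Helly property, and treewidth -/

section TreeAux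

variable {ι : Type*} {W : Type*}

/-- A set is walk-connected if any two of its points are joined by a walk inside it. -/
def WConn (T : SimpleGraph ι) (A : Set ι) : Prop :=
  ∀ x ∈ A, ∀ y ∈ A, ∃ w : T.Walk x y, ∀ v ∈ w.support, v ∈ A

lemma wconn_of_induce_connected {T : SimpleGraph ι} {A : Set ι}
    (h : (T.induce A).Connected) : WConn T A := by
  intro x hx y hy
  obtain ⟨p⟩ := h.preconnected ⟨x, hx⟩ ⟨y, hy⟩
  refine ⟨p.map ⟨Subtype.val, fun {a b} hab => hab⟩, ?_⟩
  intro v hv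
  rw [SimpleGraph.Walk.support_map, List.mem_map] at hv
  obtain ⟨⟨v', hv'⟩, _, rfl⟩ := hv
  exact hv'

lemma reachable_induce_of_walk {T : SimpleGraph ι} {A : Set ι} :
    ∀ {x y : ι} (w : T.Walk x y), (∀ v ∈ w.support, v ∈ A) →
      ∀ (hx : x ∈ A) (hy : y ∈ A), (T.induce A).Reachable ⟨x, hx⟩ ⟨y, hy⟩ := by
  intro x y w
  induction w with
  | nil => intro _ _ _; exact SimpleGraph.Reachable.refl _
  | @cons a b c hab p ih =>
    intro hw hx hy
    have hb : b ∈ A := hw b (by simp)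
    have h1 : (T.induce A).Adj ⟨a, hx⟩ ⟨b, hb⟩ := hab
    exact h1.reachable.trans (ih (fun v hv => hw v (by simp [hv])) hb hy)

/-- Any path between two points of a walk-connected set stays in the set (in a forest). -/
lemma path_support_subset {T : SimpleGraph ι} (hT : T.IsAcyclic) {A : Set ι} {x y : ι}
    (w : T.Walk x y) (hw : ∀ v ∈ w.support, v ∈ A)
    (p : T.Walk x y) (hp : p.IsPath) : ∀ v ∈ p.support, v ∈ A := by
  classical
  have heq : (⟨p, hp⟩ : T.Path x y) = w.toPath := hT.path_unique _ _
  intro v hv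
  have hv' : v ∈ (w.toPath : T.Walk x y).support := by
    rw [← heq]; exact hv
  exact hw v (SimpleGraph.Walk.support_toPath_subset _ hv')

lemma wconn_inter {T : SimpleGraph ι} (hT : T.IsAcyclic) (hc : T.Connected)
    {A B : Set ι} (hA : WConn T A) (hB : WConn T B) : WConn T (A ∩ B) := by
  classical
  intro x hx y hy
  obtain ⟨wA, hwA⟩ := hA x hx.1 y hy.1
  obtain ⟨wB, hwB⟩ := hB x hx.2 y hy.2
  refine ⟨(wA.toPath : T.Walk x y), fun v hv => ?_⟩
  exact ⟨path_support_subset hT wA hwA _ wA.toPath.2 v hv,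
    path_support_subset hT wB hwB _ wA.toPath.2 v hv⟩

lemma exists_frontier {T : SimpleGraph ι} {A : Set ι} :
    ∀ {a b : ι} (p : T.Walk a b), p.IsPath → a ∈ A → b ∉ A →
      ∃ (x y : ι) (q : T.Walk y b), T.Adj x y ∧ x ∈ A ∧ y ∉ A ∧ x ∉ q.support := by
  intro a b p
  induction p with
  | nil => intro _ ha hb; exact absurd ha hb
  | @cons u c b huc p ih =>
    intro hp ha hb
    rw [SimpleGraph.Walk.cons_isPath_iff] at hp
    by_cases hcA : c ∈ A
    · exact ih hp.1 hcA hb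
    · exact ⟨u, c, p, huc, ha, hcA, hp.2⟩

/-- Separation by a bridge: two disjoint subtrees are separated by an edge `x ~ y` so that
any walk-connected set meeting both contains `x` and `y`. -/
lemma bridge_sep {T : SimpleGraph ι} (hT : T.IsAcyclic) (hc : T.Connected)
    {D C : Set ι} (hDne : D.Nonempty) (hDW : WConn T D)
    (hCne : C.Nonempty) (hCW : WConn T C)
    (hDC : ∀ v, v ∈ D → v ∈ C → False) :
    ∃ x y : ι, x ∈ D ∧ y ∉ D ∧
      ∀ E : Set ι, WConn T E → (∃ d ∈ E, d ∈ D) → (∃ c ∈ E, c ∈ C) →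
        x ∈ E ∧ y ∈ E := by
  classical
  obtain ⟨a, haD⟩ := hDne
  obtain ⟨c0, hc0C⟩ := hCne
  have hc0D : c0 ∉ D := fun h => hDC _ h hc0C
  obtain ⟨w0⟩ := hc.preconnected a c0
  obtain ⟨x, y, q, hxy, hxD, hyD, hxq⟩ :=
    exists_frontier (w0.toPath : T.Walk a c0) w0.toPath.2 haD hc0D
  set T' := T.deleteEdges {s(x, y)} with hT'
  have hbridge : T.IsBridge s(x, y) :=
    (SimpleGraph.isAcyclic_iff_forall_adj_isBridge.mp hT) hxy
  have hnr : ¬ T'.Reachable x y := SimpleGraph.isBridge_iff.mp hbridge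
  -- transfer a walk avoiding x (or avoiding y) to T'
  have htrans : ∀ {u v : ι} (w : T.Walk u v), (x ∉ w.support ∨ y ∉ w.support) →
      T'.Reachable u v := by
    intro u v w hav
    have hedges : ∀ e ∈ w.edges, e ∉ ({s(x, y)} : Set (Sym2 ι)) := by
      intro e he hmem
      rw [Set.mem_singleton_iff] at hmem
      subst hmem
      rcases hav with h | h
      · exact h (SimpleGraph.Walk.fst_mem_support_of_mem_edges w he)
      · exact h (SimpleGraph.Walk.snd_mem_support_of_mem_edges w he)
    exact ⟨w.toDeleteEdges _ hedges⟩
  have f1 : ∀ z ∈ D, T'.Reachable z x := by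
    intro z hz
    obtain ⟨w, hw⟩ := hDW z hz x hxD
    exact htrans w (Or.inr fun h => hyD (hw y h))
  have f2 : T'.Reachable y c0 := htrans q (Or.inl hxq)
  have f3 : ∀ z ∈ C, T'.Reachable z y := by
    intro z hz
    obtain ⟨w, hw⟩ := hCW z hz c0 hc0C
    exact (htrans w (Or.inl fun h => hDC x hxD (hw x h))).trans f2.symm
  refine ⟨x, y, hxD, hyD, ?_⟩
  rintro E hEW ⟨d, hdE, hdD⟩ ⟨c, hcE, hcC⟩
  obtain ⟨w, hw⟩ := hEW d hdE c hcE
  by_cases hedge : s(x, y) ∈ w.edges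
  · exact ⟨hw x (SimpleGraph.Walk.fst_mem_support_of_mem_edges w hedge),
      hw y (SimpleGraph.Walk.snd_mem_support_of_mem_edges w hedge)⟩
  · exfalso
    have hreach : T'.Reachable d c := by
      refine ⟨w.toDeleteEdges _ ?_⟩
      intro e he hmem
      rw [Set.mem_singleton_iff] at hmem
      exact hedge (hmem ▸ he)
    exact hnr (((f1 d hdD).symm.trans hreach).trans (f3 c hcC))

/-- Helly property for three subtrees. -/
lemma helly3 {T : SimpleGraph ι} (hT : T.IsAcyclic) (hc : T.Connected)
    {A B C : Set ι} (hA : WConn T A) (hB : WConn T B) (hC : WConn T C)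
    (hAB : (A ∩ B).Nonempty) (hAC : (A ∩ C).Nonempty) (hBC : (B ∩ C).Nonempty) :
    (A ∩ B ∩ C).Nonempty := by
  by_contra hempty
  rw [Set.not_nonempty_iff_eq_empty] at hempty
  have hdisj : ∀ v, v ∈ A ∩ B → v ∈ C → False := by
    intro v hv hvC
    have : v ∈ A ∩ B ∩ C := ⟨hv, hvC⟩
    rw [hempty] at this
    exact this
  obtain ⟨x, y, hxD, hyD, hkey⟩ :=
    bridge_sep hT hc hAB (wconn_inter hT hc hA hB) (hAC.mono (Set.inter_subset_right))
      hC hdisj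
  have hxA : x ∈ A ∧ y ∈ A := by
    refine hkey A hA ?_ ?_
    · obtain ⟨z, hz⟩ := hAB; exact ⟨z, hz.1, hz⟩
    · obtain ⟨z, hz⟩ := hAC; exact ⟨z, hz.1, hz.2⟩
  have hxB : x ∈ B ∧ y ∈ B := by
    refine hkey B hB ?_ ?_
    · obtain ⟨z, hz⟩ := hAB; exact ⟨z, hz.2, hz⟩
    · obtain ⟨z, hz⟩ := hBC; exact ⟨z, hz.1, hz.2⟩
  exact hyD ⟨hxA.2, hxB.2⟩

/-- Helly property for finite families of subtrees. -/
lemma hellyList {T : SimpleGraph ι} (hT : T.IsAcyclic) (hc : T.Connected) :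
    ∀ (n : ℕ) (l : List (Set ι)), l.length = n →
      (∀ A ∈ l, WConn T A) → (∀ A ∈ l, ∀ B ∈ l, (A ∩ B).Nonempty) → l ≠ [] →
      ∃ z, ∀ A ∈ l, z ∈ A := by
  intro n
  induction n with
  | zero => intro l hl _ _ hne; cases l with
    | nil => exact absurd rfl hne
    | cons A t => simp at hl
  | succ n ih =>
    intro l hl hW hI hne
    cases l with
    | nil => exact absurd rfl hne
    | cons A rest =>
      cases rest with
      | nil =>
        obtain ⟨z, hz⟩ := hI A (by simp) A (by simp)
        exact ⟨z, by intro X hX; rw [List.mem_singleton] at hX; subst hX; exact hz.1⟩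
      | cons B rest2 =>
        have hlen : ((A ∩ B) :: rest2).length = n := by
          simpa using Nat.succ_injective hl
        have hWAB : WConn T (A ∩ B) :=
          wconn_inter hT hc (hW A (by simp)) (hW B (by simp))
        have cond1 : ∀ X ∈ (A ∩ B) :: rest2, WConn T X := by
          intro X hX
          rcases List.mem_cons.mp hX with rfl | hX
          · exact hWAB
          · exact hW X (by simp [hX])
        have cond2 : ∀ X ∈ (A ∩ B) :: rest2, ∀ Y ∈ (A ∩ B) :: rest2, (X ∩ Y).Nonempty := by
          intro X hX Y hY
          rcases List.mem_cons.mp hX with rfl | hX <;>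
            rcases List.mem_cons.mp hY with rfl | hY
          · exact (hI A (by simp) B (by simp)).mono
              (by intro v hv; exact ⟨⟨hv.1, hv.2⟩, hv.1, hv.2⟩)
          · exact helly3 hT hc (hW A (by simp)) (hW B (by simp))
              (hW Y (by simp [hY]))
              (hI A (by simp) B (by simp)) (hI A (by simp) Y (by simp [hY]))
              (hI B (by simp) Y (by simp [hY]))
          · obtain ⟨z', hz'⟩ := helly3 hT hc (hW A (by simp)) (hW B (by simp))
              (hW X (by simp [hX]))
              (hI A (by simp) B (by simp)) (hI A (by simp) X (by simp [hX]))
              (hI B (by simp) X (by simp [hX]))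
            exact ⟨z', hz'.2, hz'.1⟩
          · exact hI X (by simp [hX]) Y (by simp [hY])
        obtain ⟨z, hz⟩ := ih ((A ∩ B) :: rest2) hlen cond1 cond2 (by simp)
        refine ⟨z, ?_⟩
        have hzAB : z ∈ A ∩ B := hz (A ∩ B) List.mem_cons_self
        intro X hX
        rcases List.mem_cons.mp hX with rfl | hX
        · exact hzAB.1
        rcases List.mem_cons.mp hX with rfl | hX
        · exact hzAB.2
        · exact hz X (List.mem_cons_of_mem _ hX)

/-- The union of the bags of the vertices of a connected set is walk-connected
in the decomposition tree. -/
lemma wconn_biUnion {H : SimpleGraph W} {T : SimpleGraph ι} {t : W → Set ι}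
    (htW : ∀ v, WConn T (t v))
    (htedge : ∀ u v, H.Adj u v → (t u ∩ t v).Nonempty)
    {Bw : Set W} (hconn : (H.induce Bw).Connected) :
    WConn T (⋃ v ∈ Bw, t v) := by
  have aux : ∀ {uu vv : ↥Bw} (p : (H.induce Bw).Walk uu vv) {x y : ι},
      x ∈ t ↑uu → y ∈ t ↑vv →
      ∃ w : T.Walk x y, ∀ z ∈ w.support, z ∈ ⋃ v ∈ Bw, t v := by
    intro uu vv p
    induction p with
    | @nil aa =>
      intro x y hx hy
      obtain ⟨w, hw⟩ := htW _ x hx y hy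
      exact ⟨w, fun z hz => Set.mem_biUnion aa.2 (hw z hz)⟩
    | @cons aa bb cc hab p ih =>
      intro x y hx hy
      have hadj : H.Adj ↑aa ↑bb := hab
      obtain ⟨m, hm⟩ := htedge _ _ hadj
      obtain ⟨w1, hw1⟩ := htW ↑aa x hx m hm.1
      obtain ⟨w2, hw2⟩ := ih hm.2 hy
      refine ⟨w1.append w2, ?_⟩
      intro z hz
      rcases (SimpleGraph.Walk.mem_support_append_iff _ _).mp hz with h | h
      · exact Set.mem_biUnion aa.2 (hw1 z h)
      · exact hw2 z h
  intro x hx y hy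
  rw [Set.mem_iUnion₂] at hx hy
  obtain ⟨u, hu, hxu⟩ := hx
  obtain ⟨v, hv, hyv⟩ := hy
  obtain ⟨p⟩ := hconn.preconnected ⟨u, hu⟩ ⟨v, hv⟩
  exact aux p hxu hyv

lemma dite_inj {s : ℕ} {α : Type*} (F : Fin s → α) (hF : Function.Injective F)
    (a : α) (ha : ∀ k, F k ≠ a) :
    Function.Injective (fun m : Fin (s+1) =>
      if h : (m : ℕ) < s then F ⟨m, h⟩ else a) := by
  intro m m' he
  simp only at he
  by_cases h1 : (m : ℕ) < s <;> by_cases h2 : (m' : ℕ) < s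
  · rw [dif_pos h1, dif_pos h2] at he
    have h3 := hF he
    injection h3 with h4
    exact Fin.ext h4
  · rw [dif_pos h1, dif_neg h2] at he
    exact absurd he (ha _)
  · rw [dif_neg h1, dif_pos h2] at he
    exact absurd he.symm (ha _)
  · have := m.isLt; have := m'.isLt
    exact Fin.ext (by omega)

/-- Treewidth lower bound from a `K_{s,s}` minor. -/
lemma tw_lower {W : Type u} [Finite W] {H : SimpleGraph W} {s : ℕ} (hs : 0 < s)
    (hm : IsMinor (completeBipartiteGraph (Fin s) (Fin s)) H) :
    ∀ w : ℕ, TreewidthLe H w → s ≤ w := by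
  intro w htw
  obtain ⟨ι, T, hac, hTc, t, htne, htconn, htedge, hbag⟩ := htw
  obtain ⟨B, hBne, hBconn, hBdisj, hBedge⟩ := hm
  set Tr : Fin s ⊕ Fin s → Set ι := fun a => ⋃ v ∈ B a, t v with hTr
  have htW : ∀ v, WConn T (t v) := fun v => wconn_of_induce_connected (htconn v)
  have hTrW : ∀ a, WConn T (Tr a) := fun a =>
    wconn_biUnion htW htedge (hBconn a)
  have hTrne : ∀ a, (Tr a).Nonempty := by
    intro a
    obtain ⟨v, hv⟩ := hBne a
    obtain ⟨z, hz⟩ := htne v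
    exact ⟨z, Set.mem_biUnion hv hz⟩
  have cross : ∀ i j : Fin s, (Tr (Sum.inl i) ∩ Tr (Sum.inr j)).Nonempty := by
    intro i j
    have hadj : (completeBipartiteGraph (Fin s) (Fin s)).Adj (Sum.inl i) (Sum.inr j) := by
      simp
    obtain ⟨u, hu, v, hv, huv⟩ := hBedge _ _ hadj
    obtain ⟨z, hz⟩ := htedge _ _ huv
    exact ⟨z, Set.mem_biUnion hu hz.1, Set.mem_biUnion hv hz.2⟩
  have key : ∃ (z : ι) (f : Fin (s+1) → Fin s ⊕ Fin s),
      Function.Injective f ∧ ∀ m, z ∈ Tr (f m) := by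
    by_cases hcase : ∀ i j : Fin s, (Tr (Sum.inl i) ∩ Tr (Sum.inl j)).Nonempty
    · set l : List (Set ι) :=
        (List.ofFn fun i : Fin s => Tr (Sum.inl i)) ++ [Tr (Sum.inr ⟨0, hs⟩)] with hldef
      have hmeml : ∀ X ∈ l, (∃ i : Fin s, X = Tr (Sum.inl i)) ∨ X = Tr (Sum.inr ⟨0, hs⟩) := by
        intro X hX
        rw [hldef, List.mem_append, List.mem_ofFn] at hX
        rcases hX with ⟨i, rfl⟩ | hX
        · exact Or.inl ⟨i, rfl⟩
        · exact Or.inr (by simpa using hX)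
      have cond1 : ∀ X ∈ l, WConn T X := by
        intro X hX
        rcases hmeml X hX with ⟨i, rfl⟩ | rfl <;> exact hTrW _
      have cond2 : ∀ X ∈ l, ∀ Y ∈ l, (X ∩ Y).Nonempty := by
        intro X hX Y hY
        rcases hmeml X hX with ⟨i, rfl⟩ | rfl <;> rcases hmeml Y hY with ⟨j, rfl⟩ | rfl
        · exact hcase i j
        · exact cross _ _
        · exact (cross _ _).mono (by rw [Set.inter_comm])
        · exact (hTrne _).mono (by intro z hz; exact ⟨hz, hz⟩)
      have cond3 : l ≠ [] := by rw [hldef]; simp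
      obtain ⟨z, hz⟩ := hellyList hac hTc l.length l rfl cond1 cond2 cond3
      refine ⟨z, fun m => if h : (m : ℕ) < s then Sum.inl ⟨m, h⟩ else Sum.inr ⟨0, hs⟩,
        dite_inj _ (fun k k' hk => Fin.ext (congrArg Fin.val (Sum.inl.inj hk)))
          _ (fun k => Sum.inl_ne_inr), ?_⟩
      intro m
      show z ∈ Tr (if h : (m : ℕ) < s then Sum.inl ⟨m, h⟩ else Sum.inr ⟨0, hs⟩)
      by_cases h1 : (m : ℕ) < s
      · rw [dif_pos h1]
        refine hz _ ?_
        rw [hldef, List.mem_append, List.mem_ofFn]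
        exact Or.inl ⟨⟨m, h1⟩, rfl⟩
      · rw [dif_neg h1]
        exact hz _ (by rw [hldef, List.mem_append]; exact Or.inr (by simp))
    · push_neg at hcase
      obtain ⟨i, j, hij⟩ := hcase
      have hdisj : ∀ v, v ∈ Tr (Sum.inl i) → v ∈ Tr (Sum.inl j) → False := by
        intro v h1 h2
        have hv : v ∈ Tr (Sum.inl i) ∩ Tr (Sum.inl j) := ⟨h1, h2⟩
        rw [hij] at hv
        exact hv
      obtain ⟨x, y, hxD, hyD, hkey⟩ :=
        bridge_sep hac hTc (hTrne _) (hTrW (Sum.inl i)) (hTrne _) (hTrW (Sum.inl j)) hdisj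
      refine ⟨x, fun m => if h : (m : ℕ) < s then Sum.inr ⟨m, h⟩ else Sum.inl i,
        dite_inj _ (fun k k' hk => Fin.ext (congrArg Fin.val (Sum.inr.inj hk)))
          _ (fun k => Sum.inr_ne_inl), ?_⟩
      intro m
      show x ∈ Tr (if h : (m : ℕ) < s then Sum.inr ⟨m, h⟩ else Sum.inl i)
      by_cases h1 : (m : ℕ) < s
      · rw [dif_pos h1]
        obtain ⟨d, hd⟩ := cross i ⟨m, h1⟩
        obtain ⟨c, hc⟩ := cross j ⟨m, h1⟩
        exact (hkey _ (hTrW _) ⟨d, hd.2, hd.1⟩ ⟨c, hc.2, hc.1⟩).1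
      · rw [dif_neg h1]
        exact hxD
  obtain ⟨z, f, hfinj, hzf⟩ := key
  have hchoice : ∀ m, ∃ v, v ∈ B (f m) ∧ z ∈ t v := by
    intro m
    have := hzf m
    rw [hTr, Set.mem_iUnion₂] at this
    obtain ⟨v, hv, hzv⟩ := this
    exact ⟨v, hv, hzv⟩
  choose g hg1 hg2 using hchoice
  have hginj : Function.Injective g := by
    intro m m' he
    by_contra hne
    have hfne : f m ≠ f m' := fun hf => hne (hfinj hf)
    exact Set.disjoint_left.mp (hBdisj _ _ hfne) (hg1 m) (he ▸ hg1 m')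
  have hcard : s + 1 ≤ {v : W | z ∈ t v}.ncard := by
    have h1 : (Set.range g).ncard = s + 1 := by
      rw [← Set.image_univ, Set.ncard_image_of_injective _ hginj, Set.ncard_univ,
        Nat.card_eq_fintype_card, Fintype.card_fin]
    rw [← h1]
    refine Set.ncard_le_ncard ?_ (Set.toFinite _)
    rintro v ⟨m, rfl⟩
    exact hg2 m
  have := hbag z
  omega

end TreeAux

/-- If `𝔞 = (S, 𝓛)` is an `(s,h)`-array in `G`, then `G[S ∪ V(𝓛)]` contains
`K_{s,s}` as a minor and hence has treewidth at least `s`. -/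
theorem stmt12 (h s : ℕ) (hh : 0 < h) (hs : 0 < s)
    (V : Type u) (G : SimpleGraph V) (A : PDArray G s h) :
    IsMinor (completeBipartiteGraph (Fin s) (Fin s)) (G.induce A.verts) ∧
    ∀ w : ℕ, TreewidthLe (G.induce A.verts) w → s ≤ w := by
  classical
  have hπv : ∀ j : Fin s, A.π j ∈ A.verts := fun j =>
    Set.mem_union_left _ (A.π_mem j)
  have hPmem : ∀ (i : Fin s) {v : V}, v ∈ (A.P i).verts → v ∈ A.verts := fun i v hv =>
    Set.mem_union_right _ (Set.mem_iUnion.mpr ⟨i, hv⟩)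
  have hPv : ∀ (i : Fin s) (p : Fin (A.P i).n), (A.P i).f p ∈ A.verts := fun i p =>
    hPmem i (Set.mem_range_self p)
  set Bset : Fin s ⊕ Fin s → Set ↥A.verts :=
    Sum.elim (fun j => {x : ↥A.verts | (x : V) = A.π j})
      (fun i => {x : ↥A.verts | (x : V) ∈ (A.P i).verts}) with hBset
  have hminor : IsMinor (completeBipartiteGraph (Fin s) (Fin s)) (G.induce A.verts) := by
    refine ⟨Bset, ?_, ?_, ?_, ?_⟩
    · rintro (j | i)
      · exact ⟨⟨A.π j, hπv j⟩, rfl⟩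
      · exact ⟨⟨(A.P i).f ⟨0, (A.P i).npos⟩, hPv i _⟩, ⟨⟨0, (A.P i).npos⟩, rfl⟩⟩
    · rintro (j | i)
      · rw [SimpleGraph.connected_iff]
        refine ⟨fun a b => ?_, ⟨⟨⟨A.π j, hπv j⟩, rfl⟩⟩⟩
        have hab : a = b := Subtype.ext (Subtype.ext (a.2.trans b.2.symm))
        rw [hab]
      · have mkmem : ∀ p : Fin (A.P i).n,
            (⟨(A.P i).f p, hPv i p⟩ : ↥A.verts) ∈ Bset (Sum.inr i) :=
          fun p => Set.mem_range_self p
        have hreach : ∀ (m : ℕ) (hm : m < (A.P i).n),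
            ((G.induce A.verts).induce (Bset (Sum.inr i))).Reachable
              ⟨⟨(A.P i).f ⟨0, (A.P i).npos⟩, hPv i _⟩, mkmem _⟩
              ⟨⟨(A.P i).f ⟨m, hm⟩, hPv i _⟩, mkmem _⟩ := by
          intro m
          induction m with
          | zero => intro hm; exact SimpleGraph.Reachable.refl _
          | succ m ih =>
            intro hm
            have hm' : m < (A.P i).n := Nat.lt_of_succ_lt hm
            have hadj : G.Adj ((A.P i).f ⟨m, hm'⟩) ((A.P i).f ⟨m + 1, hm⟩) :=
              ((A.P i).adj _ _).mpr (Or.inl rfl)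
            have hadj2 : ((G.induce A.verts).induce (Bset (Sum.inr i))).Adj
                ⟨⟨(A.P i).f ⟨m, hm'⟩, hPv i _⟩, mkmem _⟩
                ⟨⟨(A.P i).f ⟨m + 1, hm⟩, hPv i _⟩, mkmem _⟩ := hadj
            exact (ih hm').trans hadj2.reachable
        rw [SimpleGraph.connected_iff]
        refine ⟨fun a b => ?_, ⟨⟨⟨(A.P i).f ⟨0, (A.P i).npos⟩, hPv i _⟩, mkmem _⟩⟩⟩
        have key : ∀ c : ↥(Bset (Sum.inr i)), ∃ p : Fin (A.P i).n,
            c = ⟨⟨(A.P i).f p, hPv i p⟩, mkmem p⟩ := by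
          rintro ⟨⟨vc, hvc⟩, hBc⟩
          obtain ⟨p, hp⟩ := hBc
          exact ⟨p, Subtype.ext (Subtype.ext hp.symm)⟩
        obtain ⟨pa, rfl⟩ := key a
        obtain ⟨pb, rfl⟩ := key b
        obtain ⟨pa, hpa⟩ := pa
        obtain ⟨pb, hpb⟩ := pb
        exact (hreach pa hpa).symm.trans (hreach pb hpb)
    · rintro (j | i) (j' | i') hne <;> rw [Set.disjoint_left] <;>
        rintro x hx1 hx2
      · exact hne (by rw [A.π_inj (hx1.symm.trans hx2 : A.π j = A.π j')])
      · exact A.sep _ (A.π_mem j) i' (hx1 ▸ hx2)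
      · exact A.sep _ (A.π_mem j') i (hx2 ▸ hx1)
      · have hii : i ≠ i' := fun hii => hne (by rw [hii])
        exact Set.disjoint_left.mp (A.disj i i' hii) hx1 hx2
    · rintro (j | i) (j' | i') hadj
      · simp at hadj
      · obtain ⟨v, hvP, hGadj⟩ := A.nbr _ (A.π_mem j) i'
        exact ⟨⟨A.π j, hπv j⟩, rfl, ⟨v, hPmem i' hvP⟩, hvP, hGadj⟩
      · obtain ⟨v, hvP, hGadj⟩ := A.nbr _ (A.π_mem j') i
        exact ⟨⟨v, hPmem i hvP⟩, hvP, ⟨A.π j', hπv j'⟩, rfl, hGadj.symm⟩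
      · simp at hadj
  refine ⟨hminor, ?_⟩
  have hfin : A.verts.Finite :=
    (A.S.finite_toSet).union (Set.finite_iUnion fun i => Set.finite_range _)
  have : Finite ↥A.verts := hfin.to_subtype
  exact fun w htw => tw_lower hs hminor w htw
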